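/- In K_2(F) of any field F, if a, 1-a, and 1-2a are all nonzero, then {a/(1-a), a(a-1)/(1-2a)²} = {((1-a)/a)², 1 - ((1-a)/a)²} - {a/(1-a), -a/(1-a)} - 2{a,-a} + 2{1-a, a}; in particular this element vanishes in K_2(F). -/

import Mathlib

open TensorProduct

/-- The subgroup of `Fˣ ⊗ℤ Fˣ` generated by the Steinberg elements `a ⊗ (1-a)`. -/
noncomputable def K2Rel (F : Type*) [Field F] :
    Submodule ℤ (TensorProduct ℤ (Additive Fˣ) (Additive Fˣ)) :=
  Submodule.span ℤ { x | ∃ (a : F) (ha : a ≠ 0) (ha1 : a ≠ 1),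
    x = Additive.ofMul (Units.mk0 a ha) ⊗ₜ[ℤ]
        Additive.ofMul (Units.mk0 (1 - a) (sub_ne_zero.mpr (Ne.symm ha1))) }

/-- `K₂(F) = F^* ⊗ℤ F^* / ⟨a ⊗ (1-a)⟩`. -/
noncomputable abbrev K2 (F : Type*) [Field F] :=
  TensorProduct ℤ (Additive Fˣ) (Additive Fˣ) ⧸ K2Rel F

/-- The symbol `{a, b}` in `K₂(F)`. -/
noncomputable def K2sym {F : Type*} [Field F] (a b : Fˣ) : K2 F :=
  Submodule.Quotient.mk (Additive.ofMul a ⊗ₜ[ℤ] Additive.ofMul b)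

lemma one_sub_sq_ne_zero {F : Type*} [Field F] {a : F} (ha : a ≠ 0)
    (h2a : 1 - 2 * a ≠ 0) : 1 - ((1 - a) / a) ^ 2 ≠ 0 := by
  intro h
  apply h2a
  have h' : a ^ 2 - (1 - a) ^ 2 = 0 := by
    field_simp at h
    linear_combination h
  linear_combination -h'


section K2Lemmas

variable {F : Type*} [Field F]

lemma K2sym_mul_right (a b c : Fˣ) : K2sym a (b * c) = K2sym a b + K2sym a c := by
  unfold K2sym
  rw [show (Additive.ofMul (b * c) : Additive Fˣ)
      = Additive.ofMul b + Additive.ofMul c from rfl, tmul_add]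
  rfl

lemma K2sym_mul_left (a b c : Fˣ) : K2sym (a * b) c = K2sym a c + K2sym b c := by
  unfold K2sym
  rw [show (Additive.ofMul (a * b) : Additive Fˣ)
      = Additive.ofMul a + Additive.ofMul b from rfl, add_tmul]
  rfl

lemma K2sym_one_right (a : Fˣ) : K2sym a 1 = 0 := by
  unfold K2sym
  rw [show (Additive.ofMul (1 : Fˣ) : Additive Fˣ) = 0 from rfl, tmul_zero]
  rfl

lemma K2sym_one_left (b : Fˣ) : K2sym 1 b = 0 := by
  unfold K2sym
  rw [show (Additive.ofMul (1 : Fˣ) : Additive Fˣ) = 0 from rfl, zero_tmul]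
  rfl

lemma K2sym_inv_right (a b : Fˣ) : K2sym a b⁻¹ = -K2sym a b := by
  have h := K2sym_mul_right a b b⁻¹
  rw [mul_inv_cancel, K2sym_one_right] at h
  rw [eq_neg_iff_add_eq_zero, add_comm]
  exact h.symm

lemma K2sym_inv_left (a b : Fˣ) : K2sym a⁻¹ b = -K2sym a b := by
  have h := K2sym_mul_left a a⁻¹ b
  rw [mul_inv_cancel, K2sym_one_left] at h
  rw [eq_neg_iff_add_eq_zero, add_comm]
  exact h.symm

lemma K2sym_steinberg {u v : Fˣ} (hu : (u : F) ≠ 1) (hv : (v : F) = 1 - u) :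
    K2sym u v = 0 := by
  unfold K2sym
  rw [Submodule.Quotient.mk_eq_zero]
  apply Submodule.subset_span
  refine ⟨(u : F), u.ne_zero, hu, ?_⟩
  congr 1
  · exact congrArg Additive.ofMul (Units.ext rfl)
  · exact congrArg Additive.ofMul (Units.ext (by rw [Units.val_mk0]; exact hv))

lemma K2sym_neg_self (a : Fˣ) : K2sym a (-a) = 0 := by
  by_cases h1 : (a : F) = 1
  · have : a = 1 := Units.ext h1
    subst this
    have := K2sym_one_left (F := F) (-1)
    exact this
  · have hne : (a⁻¹ : Fˣ) ≠ (1 : Fˣ) := by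
      intro h
      exact h1 (by rw [show a = 1 from by rw [← inv_inv a, h, inv_one]]; rfl)
    have hinv1 : ((a⁻¹ : Fˣ) : F) ≠ 1 := fun h => hne (Units.ext h)
    -- -a = (1 - a) * (1 - a⁻¹)⁻¹
    have key : (-a : Fˣ) = Units.mk0 (1 - (a : F)) (sub_ne_zero.mpr (Ne.symm h1)) *
        (Units.mk0 (1 - ((a⁻¹ : Fˣ) : F)) (sub_ne_zero.mpr (Ne.symm hinv1)))⁻¹ := by
      apply Units.ext
      have ha0 : (a : F) ≠ 0 := a.ne_zero
      have hinv0 : 1 - ((a : F))⁻¹ ≠ 0 := by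
        intro h
        apply hinv1
        rw [Units.val_inv_eq_inv_val]
        linear_combination -h
      rw [Units.val_mul, Units.val_inv_eq_inv_val, Units.val_mk0, Units.val_mk0,
        Units.val_neg, Units.val_inv_eq_inv_val] at *
      have hm : (a : F) - 1 ≠ 0 := sub_ne_zero.mpr h1
      rw [show (1 - ((a : F))⁻¹) = ((a : F) - 1) / (a : F) by field_simp]
      field_simp
      ring
    rw [key, K2sym_mul_right, K2sym_inv_right]
    rw [K2sym_steinberg h1 rfl]
    have h2 : K2sym a (Units.mk0 (1 - ((a⁻¹ : Fˣ) : F)) (sub_ne_zero.mpr (Ne.symm hinv1)))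
        = -K2sym a⁻¹ (Units.mk0 (1 - ((a⁻¹ : Fˣ) : F)) (sub_ne_zero.mpr (Ne.symm hinv1))) := by
      rw [K2sym_inv_left, neg_neg]
    rw [h2, K2sym_steinberg hinv1 rfl]
    simp

end K2Lemmas

theorem K2_dilog_identity {F : Type*} [Field F] (a : F) (ha : a ≠ 0)
    (h1a : 1 - a ≠ 0) (h2a : 1 - 2 * a ≠ 0) :
    K2sym (Units.mk0 (a / (1 - a)) (div_ne_zero ha h1a))
        (Units.mk0 (a * (a - 1) / (1 - 2 * a) ^ 2)
          (div_ne_zero (mul_ne_zero ha (fun h => h1a (by linear_combination -h)))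
            (pow_ne_zero 2 h2a)))
      = K2sym (Units.mk0 (((1 - a) / a) ^ 2) (pow_ne_zero 2 (div_ne_zero h1a ha)))
            (Units.mk0 (1 - ((1 - a) / a) ^ 2) (one_sub_sq_ne_zero ha h2a))
        - K2sym (Units.mk0 (a / (1 - a)) (div_ne_zero ha h1a))
            (-(Units.mk0 (a / (1 - a)) (div_ne_zero ha h1a)))
        - 2 • K2sym (Units.mk0 a ha) (-(Units.mk0 a ha))
        + 2 • K2sym (Units.mk0 (1 - a) h1a) (Units.mk0 a ha) ∧
    K2sym (Units.mk0 (a / (1 - a)) (div_ne_zero ha h1a))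
        (Units.mk0 (a * (a - 1) / (1 - 2 * a) ^ 2)
          (div_ne_zero (mul_ne_zero ha (fun h => h1a (by linear_combination -h)))
            (pow_ne_zero 2 h2a)))
      = 0 := by
  classical
  set u : Fˣ := Units.mk0 (a / (1 - a)) (div_ne_zero ha h1a) with hu
  have hu1 : (u : F) ≠ 1 := by
    rw [hu, Units.val_mk0]
    intro h
    apply h2a
    field_simp at h
    linear_combination -h
  -- w = (1-a)/(1-2a), with w⁻¹ = 1 - u
  have hw0 : (1 - a) / (1 - 2 * a) ≠ 0 := div_ne_zero h1a h2a
  set w : Fˣ := Units.mk0 ((1 - a) / (1 - 2 * a)) hw0 with hwdef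
  have hwinv : ((w⁻¹ : Fˣ) : F) = 1 - u := by
    rw [hwdef, hu]
    push_cast
    simp only [Units.val_mk0]
    field_simp
    ring
  have hsw : K2sym u w⁻¹ = 0 := K2sym_steinberg hu1 hwinv
  have hsw' : K2sym u w = 0 := by
    have := K2sym_inv_right u w
    rw [hsw] at this
    rw [← neg_neg (K2sym u w), ← this, neg_zero]
  -- second argument decomposition
  have hb : (Units.mk0 (a * (a - 1) / (1 - 2 * a) ^ 2)
      (div_ne_zero (mul_ne_zero ha (fun h => h1a (by linear_combination -h)))
        (pow_ne_zero 2 h2a))) = (-u) * w * w := by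
    apply Units.ext
    push_cast
    rw [Units.val_mk0, hu, hwdef, Units.val_mk0, Units.val_mk0]
    field_simp
    ring
  have hLHS : K2sym u (Units.mk0 (a * (a - 1) / (1 - 2 * a) ^ 2)
      (div_ne_zero (mul_ne_zero ha (fun h => h1a (by linear_combination -h)))
        (pow_ne_zero 2 h2a))) = 0 := by
    rw [hb]
    rw [mul_assoc, K2sym_mul_right, K2sym_mul_right, hsw', K2sym_neg_self]
    simp
  constructor
  · rw [hLHS]
    have h1 : K2sym (Units.mk0 (((1 - a) / a) ^ 2) (pow_ne_zero 2 (div_ne_zero h1a ha)))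
        (Units.mk0 (1 - ((1 - a) / a) ^ 2) (one_sub_sq_ne_zero ha h2a)) = 0 := by
      apply K2sym_steinberg
      · rw [Units.val_mk0]
        intro h
        exact one_sub_sq_ne_zero ha h2a (by rw [h]; ring)
      · rfl
    have h2 : K2sym u (-u) = 0 := K2sym_neg_self u
    have h3 : K2sym (Units.mk0 a ha) (-(Units.mk0 a ha)) = 0 :=
      K2sym_neg_self _
    have h4 : K2sym (Units.mk0 (1 - a) h1a) (Units.mk0 a ha) = 0 := by
      apply K2sym_steinberg
      · rw [Units.val_mk0]
        intro h
        exact ha (by linear_combination -h)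
      · rw [Units.val_mk0, Units.val_mk0]; ring
    rw [h1, h2, h3, h4]
    simp
  · exact hLHS
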